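/- Let 1 < p < 2 and k ≥ 1. There exists a constant c = c(k, p) > 0 such that for all ξ, η ∈ ℝ^k one has |V(ξ) − V(η)| ≤ c(k, p) · |V(ξ − η)|. -/

import Mathlib

/-- The auxiliary function `V(ξ) = (1 + |ξ|²)^((p-2)/4) ξ`. -/
noncomputable def V {E : Type*} [NormedAddCommGroup E] [NormedSpace ℝ E] (p : ℝ) (ξ : E) : E :=
  ((1 + ‖ξ‖ ^ 2) ^ ((p - 2) / 4)) • ξ

set_option maxHeartbeats 1000000
set_option synthInstance.maxHeartbeats 400000

section aux

variable {E : Type*} [NormedAddCommGroup E] [InnerProductSpace ℝ E] {p : ℝ}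

lemma norm_V (p : ℝ) (x : E) : ‖V p x‖ = (1 + ‖x‖ ^ 2) ^ ((p - 2) / 4) * ‖x‖ := by
  have h : (0:ℝ) < 1 + ‖x‖ ^ 2 := by positivity
  rw [V, norm_smul, Real.norm_eq_abs, abs_of_pos (Real.rpow_pos_of_pos h _)]

lemma g_mono (hp1 : 1 < p) (hp2 : p < 2) {s t : ℝ} (hs : 0 ≤ s) (hst : s ≤ t) :
    (1 + s ^ 2) ^ ((p - 2) / 4) * s ≤ (1 + t ^ 2) ^ ((p - 2) / 4) * t := by
  rcases hs.eq_or_lt with h0 | h0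
  · have ht : 0 ≤ t := le_trans h0.le hst
    have : (0:ℝ) ≤ (1 + t ^ 2) ^ ((p - 2) / 4) * t :=
      mul_nonneg (Real.rpow_nonneg (by positivity) _) ht
    simpa [← h0] using this
  · have ht : 0 < t := h0.trans_le hst
    have hβ0 : 0 < (2 - p) / 4 := by linarith
    have hβ1 : 2 * ((2 - p) / 4) ≤ 1 := by linarith
    have hs2 : (0:ℝ) < 1 + s ^ 2 := by positivity
    have ht2 : (0:ℝ) < 1 + t ^ 2 := by positivity
    have hexp : (p - 2) / 4 = -((2 - p) / 4) := by ring
    rw [hexp, Real.rpow_neg hs2.le, Real.rpow_neg ht2.le, inv_mul_eq_div, inv_mul_eq_div,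
      div_le_div_iff₀ (Real.rpow_pos_of_pos hs2 _) (Real.rpow_pos_of_pos ht2 _)]
    -- goal : s * (1+t^2)^β ≤ t * (1+s^2)^β
    have key : s / t ≤ ((1 + s ^ 2) / (1 + t ^ 2)) ^ ((2 - p) / 4) := by
      have h1 : ((s / t) ^ 2 : ℝ) ^ ((2 - p) / 4)
          ≤ ((1 + s ^ 2) / (1 + t ^ 2)) ^ ((2 - p) / 4) := by
        apply Real.rpow_le_rpow (by positivity) _ hβ0.le
        rw [div_pow, div_le_div_iff₀ (by positivity) ht2]
        nlinarith
      have h2 : s / t ≤ ((s / t) ^ 2 : ℝ) ^ ((2 - p) / 4) := by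
        have hst1 : s / t ≤ 1 := (div_le_one ht).mpr hst
        have hst0 : 0 < s / t := div_pos h0 ht
        calc s / t = (s / t) ^ (1:ℝ) := (Real.rpow_one _).symm
          _ ≤ (s / t) ^ (2 * ((2 - p) / 4)) :=
              Real.rpow_le_rpow_of_exponent_ge hst0 hst1 hβ1
          _ = (((s / t) ^ (2:ℕ) : ℝ)) ^ ((2 - p) / 4) := by
              rw [← Real.rpow_natCast (s / t) 2, ← Real.rpow_mul hst0.le]
              norm_num
      exact h2.trans h1
    rw [Real.div_rpow hs2.le ht2.le,
      div_le_div_iff₀ ht (Real.rpow_pos_of_pos ht2 _)] at key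
    linarith [key]

lemma V_hasFDerivAt (p : ℝ) (ζ : E) :
    HasFDerivAt (V p)
      (((1 + ‖ζ‖ ^ 2) ^ ((p - 2) / 4)) • (ContinuousLinearMap.id ℝ E)
        + ((((p - 2) / 4) * (1 + ‖ζ‖ ^ 2) ^ ((p - 2) / 4 - 1)) •
            (2 • (innerSL ℝ ζ))).smulRight ζ) ζ := by
  have h1 : HasFDerivAt (fun x : E => 1 + ‖x‖ ^ 2) (2 • innerSL ℝ ζ) ζ := by
    have := ((hasFDerivAt_id ζ).norm_sq).const_add (1:ℝ)
    simpa using this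
  have h2 := h1.rpow_const (p := (p - 2) / 4) (Or.inl (by positivity))
  have h3 := h2.smul (hasFDerivAt_id ζ)
  have e : V p = (fun x : E => ((1 + ‖x‖ ^ 2) ^ ((p - 2) / 4) : ℝ)) • (id : E → E) := by
    funext x; rfl
  rw [e]
  simpa using h3

lemma V_deriv_norm_bound (hp1 : 1 < p) (hp2 : p < 2) (ζ : E) :
    ‖(((1 + ‖ζ‖ ^ 2) ^ ((p - 2) / 4)) • (ContinuousLinearMap.id ℝ E)
        + ((((p - 2) / 4) * (1 + ‖ζ‖ ^ 2) ^ ((p - 2) / 4 - 1)) •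
            (2 • (innerSL ℝ ζ))).smulRight ζ)‖
      ≤ (3 / 2) * (1 + ‖ζ‖ ^ 2) ^ ((p - 2) / 4) := by
  have ht : (0:ℝ) < 1 + ‖ζ‖ ^ 2 := by positivity
  have hpow : (0:ℝ) < (1 + ‖ζ‖ ^ 2) ^ ((p - 2) / 4) := Real.rpow_pos_of_pos ht _
  have hpow1 : (0:ℝ) < (1 + ‖ζ‖ ^ 2) ^ ((p - 2) / 4 - 1) := Real.rpow_pos_of_pos ht _
  have hmul : (1 + ‖ζ‖ ^ 2) ^ ((p - 2) / 4 - 1) * (1 + ‖ζ‖ ^ 2)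
      = (1 + ‖ζ‖ ^ 2) ^ ((p - 2) / 4) := by
    rw [← Real.rpow_add_one ht.ne' ((p - 2) / 4 - 1), sub_add_cancel]
  apply ContinuousLinearMap.opNorm_le_bound _ (by positivity)
  intro h
  have happ : (((1 + ‖ζ‖ ^ 2) ^ ((p - 2) / 4)) • (ContinuousLinearMap.id ℝ E)
        + ((((p - 2) / 4) * (1 + ‖ζ‖ ^ 2) ^ ((p - 2) / 4 - 1)) •
            (2 • (innerSL ℝ ζ))).smulRight ζ) h
      = ((1 + ‖ζ‖ ^ 2) ^ ((p - 2) / 4)) • h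
        + ((((p - 2) / 4) * (1 + ‖ζ‖ ^ 2) ^ ((p - 2) / 4 - 1)) * (2 * (inner ℝ ζ h : ℝ))) • ζ := by
    simp only [ContinuousLinearMap.add_apply, ContinuousLinearMap.smul_apply,
      ContinuousLinearMap.smulRight_apply, ContinuousLinearMap.coe_id', id_eq,
      innerSL_apply_apply, smul_eq_mul, nsmul_eq_mul, Nat.cast_ofNat]
  rw [happ]
  refine le_trans (norm_add_le _ _) ?_
  rw [norm_smul, norm_smul, Real.norm_eq_abs, Real.norm_eq_abs, abs_of_pos hpow]
  have habs : |(((p - 2) / 4) * (1 + ‖ζ‖ ^ 2) ^ ((p - 2) / 4 - 1)) * (2 * (inner ℝ ζ h : ℝ))|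
      = |(p - 2) / 4| * (1 + ‖ζ‖ ^ 2) ^ ((p - 2) / 4 - 1) * (2 * |(inner ℝ ζ h : ℝ)|) := by
    rw [abs_mul, abs_mul, abs_mul, abs_of_pos hpow1, abs_two]
  rw [habs]
  have hαabs : |(p - 2) / 4| ≤ 1 / 4 := by
    rw [abs_le]; constructor <;> [linarith; linarith]
  have hinner : |(inner ℝ ζ h : ℝ)| ≤ ‖ζ‖ * ‖h‖ := abs_real_inner_le_norm ζ h
  have hstep : |(p - 2) / 4| * (1 + ‖ζ‖ ^ 2) ^ ((p - 2) / 4 - 1) * (2 * |(inner ℝ ζ h : ℝ)|) * ‖ζ‖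
      ≤ (1 / 2) * (1 + ‖ζ‖ ^ 2) ^ ((p - 2) / 4) * ‖h‖ := by
    calc |(p - 2) / 4| * (1 + ‖ζ‖ ^ 2) ^ ((p - 2) / 4 - 1) * (2 * |(inner ℝ ζ h : ℝ)|) * ‖ζ‖
        ≤ (1 / 4) * (1 + ‖ζ‖ ^ 2) ^ ((p - 2) / 4 - 1) * (2 * (‖ζ‖ * ‖h‖)) * ‖ζ‖ := by
          gcongr
      _ = (1 / 2) * ((1 + ‖ζ‖ ^ 2) ^ ((p - 2) / 4 - 1) * (‖ζ‖ * ‖ζ‖)) * ‖h‖ := by ring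
      _ ≤ (1 / 2) * ((1 + ‖ζ‖ ^ 2) ^ ((p - 2) / 4 - 1) * (1 + ‖ζ‖ ^ 2)) * ‖h‖ := by
          gcongr
          nlinarith [norm_nonneg ζ]
      _ = (1 / 2) * (1 + ‖ζ‖ ^ 2) ^ ((p - 2) / 4) * ‖h‖ := by rw [hmul]
  nlinarith [mul_nonneg hpow.le (norm_nonneg h)]

lemma key_lemma (hp1 : 1 < p) (hp2 : p < 2) (ξ η : E) (hle : ‖η‖ ≤ ‖ξ‖) :
    ‖V p ξ - V p η‖ ≤ 4 * ‖V p (ξ - η)‖ := by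
  have hα0 : (p - 2) / 4 ≤ 0 := by linarith
  have hr2 : (0:ℝ) < 1 + ‖ξ - η‖ ^ 2 := by positivity
  rcases le_or_gt ‖ξ‖ (2 * ‖ξ - η‖) with hcase | hcase
  · -- easy case: use monotonicity
    have h1 : ‖V p ξ - V p η‖ ≤ ‖V p ξ‖ + ‖V p η‖ := norm_sub_le _ _
    have h2 : ‖V p η‖ ≤ ‖V p ξ‖ := by
      rw [norm_V, norm_V]; exact g_mono hp1 hp2 (norm_nonneg η) hle
    have h3 : ‖V p ξ‖ ≤ (1 + (2 * ‖ξ - η‖) ^ 2) ^ ((p - 2) / 4) * (2 * ‖ξ - η‖) := by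
      rw [norm_V]; exact g_mono hp1 hp2 (norm_nonneg ξ) hcase
    have h4 : (1 + (2 * ‖ξ - η‖) ^ 2) ^ ((p - 2) / 4) ≤ (1 + ‖ξ - η‖ ^ 2) ^ ((p - 2) / 4) := by
      apply Real.rpow_le_rpow_of_nonpos hr2 _ hα0
      nlinarith [norm_nonneg (ξ - η)]
    have h5 : (1 + (2 * ‖ξ - η‖) ^ 2) ^ ((p - 2) / 4) * (2 * ‖ξ - η‖)
        ≤ 2 * ((1 + ‖ξ - η‖ ^ 2) ^ ((p - 2) / 4) * ‖ξ - η‖) := by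
      nlinarith [norm_nonneg (ξ - η),
        Real.rpow_pos_of_pos (show (0:ℝ) < 1 + (2 * ‖ξ - η‖) ^ 2 by positivity) ((p - 2) / 4)]
    rw [norm_V]
    linarith
  · -- hard case: mean value theorem on the segment
    have hξpos : (0:ℝ) < ‖ξ‖ := lt_of_le_of_lt (by positivity) hcase
    have hseg : ∀ z ∈ segment ℝ η ξ, (1 + ‖ξ‖ ^ 2) / 4 ≤ 1 + ‖z‖ ^ 2 := by
      intro z hz
      obtain ⟨a, b, ha, hb, hab, rfl⟩ := hz
      have hdist : ‖ξ - (a • η + b • ξ)‖ ≤ ‖ξ - η‖ := by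
        have heq : ξ - (a • η + b • ξ) = a • (ξ - η) := by
          rw [show (b : ℝ) = 1 - a by linarith]
          module
        rw [heq, norm_smul, Real.norm_eq_abs, abs_of_nonneg ha]
        nlinarith [norm_nonneg (ξ - η)]
      have hz1 : ‖ξ‖ / 2 ≤ ‖a • η + b • ξ‖ := by
        have := norm_sub_norm_le ξ (a • η + b • ξ)
        linarith
      have hz0 : (0:ℝ) ≤ ‖a • η + b • ξ‖ := norm_nonneg _
      nlinarith
    have hmvt : ‖V p ξ - V p η‖
        ≤ ((3 / 2) * ((1 + ‖ξ‖ ^ 2) / 4) ^ ((p - 2) / 4)) * ‖ξ - η‖ := by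
      apply Convex.norm_image_sub_le_of_norm_hasFDerivWithin_le
        (f' := fderiv ℝ (V p)) (fun z _ => ?_) (fun z hz => ?_)
        (convex_segment η ξ) (left_mem_segment ℝ η ξ) (right_mem_segment ℝ η ξ)
      · rw [(V_hasFDerivAt p z).fderiv]
        exact (V_hasFDerivAt p z).hasFDerivWithinAt
      · rw [(V_hasFDerivAt p z).fderiv]
        refine le_trans (V_deriv_norm_bound hp1 hp2 z) ?_
        have hmono := Real.rpow_le_rpow_of_nonpos
          (show (0:ℝ) < (1 + ‖ξ‖ ^ 2) / 4 by positivity) (hseg z hz) hα0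
        linarith
    have hCle : (3 / 2) * ((1 + ‖ξ‖ ^ 2) / 4) ^ ((p - 2) / 4)
        ≤ 3 * (1 + ‖ξ - η‖ ^ 2) ^ ((p - 2) / 4) := by
      have h41 : ((1 + ‖ξ‖ ^ 2) / 4) ^ ((p - 2) / 4)
          = (1 + ‖ξ‖ ^ 2) ^ ((p - 2) / 4) / (4:ℝ) ^ ((p - 2) / 4) := by
        rw [Real.div_rpow (by positivity) (by norm_num)]
      have h4α : (1:ℝ) / 2 ≤ (4:ℝ) ^ ((p - 2) / 4) := by
        have h1 : ((4:ℝ)) ^ (-(1/4) : ℝ) ≤ (4:ℝ) ^ ((p - 2) / 4) := by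
          apply Real.rpow_le_rpow_of_exponent_le (by norm_num)
          linarith
        have h2 : ((4:ℝ)) ^ ((1/4 : ℝ)) ≤ 2 := by
          calc ((4:ℝ)) ^ ((1/4 : ℝ)) ≤ ((4:ℝ)) ^ ((1/2 : ℝ)) :=
              Real.rpow_le_rpow_of_exponent_le (by norm_num) (by norm_num)
            _ = 2 := by
              rw [show (4:ℝ) = 2 ^ (2:ℕ) by norm_num, ← Real.rpow_natCast 2 2,
                ← Real.rpow_mul (by norm_num)]
              norm_num
        have h4 : (0:ℝ) < ((4:ℝ)) ^ ((1/4 : ℝ)) := Real.rpow_pos_of_pos (by norm_num) _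
        have h3 : ((4:ℝ)) ^ (-(1/4) : ℝ) = (((4:ℝ)) ^ ((1/4 : ℝ)))⁻¹ :=
          Real.rpow_neg (by norm_num) _
        rw [h3] at h1
        have h5 : (2:ℝ)⁻¹ ≤ (((4:ℝ)) ^ ((1/4 : ℝ)))⁻¹ := by
          apply inv_anti₀ h4 h2
        have h6 : ((2:ℝ))⁻¹ = 1/2 := by norm_num
        linarith
      have hξα : (1 + ‖ξ‖ ^ 2) ^ ((p - 2) / 4) ≤ (1 + ‖ξ - η‖ ^ 2) ^ ((p - 2) / 4) := by
        apply Real.rpow_le_rpow_of_nonpos hr2 _ hα0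
        have h6 : ‖ξ - η‖ ≤ ‖ξ‖ := by linarith
        nlinarith [norm_nonneg (ξ - η)]
      have hξpow : (0:ℝ) < (1 + ‖ξ‖ ^ 2) ^ ((p - 2) / 4) :=
        Real.rpow_pos_of_pos (by positivity) _
      have h4pos : (0:ℝ) < (4:ℝ) ^ ((p - 2) / 4) := Real.rpow_pos_of_pos (by norm_num) _
      calc (3/2) * ((1 + ‖ξ‖ ^ 2) / 4) ^ ((p - 2) / 4)
          = (3/2) * ((1 + ‖ξ‖ ^ 2) ^ ((p - 2) / 4) / (4:ℝ) ^ ((p - 2) / 4)) := by rw [h41]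
        _ ≤ (3/2) * ((1 + ‖ξ‖ ^ 2) ^ ((p - 2) / 4) / (1/2)) := by gcongr
        _ = 3 * (1 + ‖ξ‖ ^ 2) ^ ((p - 2) / 4) := by ring
        _ ≤ 3 * (1 + ‖ξ - η‖ ^ 2) ^ ((p - 2) / 4) := by linarith
    have hfinal : ((3 / 2) * ((1 + ‖ξ‖ ^ 2) / 4) ^ ((p - 2) / 4)) * ‖ξ - η‖
        ≤ 4 * ‖V p (ξ - η)‖ := by
      rw [norm_V]
      have hrpos : (0:ℝ) < (1 + ‖ξ - η‖ ^ 2) ^ ((p - 2) / 4) := Real.rpow_pos_of_pos hr2 _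
      nlinarith [norm_nonneg (ξ - η),
        Real.rpow_pos_of_pos (show (0:ℝ) < (1 + ‖ξ‖ ^ 2) / 4 by positivity) ((p - 2) / 4)]
    linarith

end aux

theorem stmt_4 (p : ℝ) (hp1 : 1 < p) (hp2 : p < 2) (k : ℕ) (hk : 1 ≤ k) :
    ∃ c : ℝ, 0 < c ∧ ∀ ξ η : EuclideanSpace ℝ (Fin k),
      ‖V p ξ - V p η‖ ≤ c * ‖V p (ξ - η)‖ := by
  refine ⟨4, by norm_num, fun ξ η => ?_⟩
  rcases le_total ‖η‖ ‖ξ‖ with h | h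
  · exact key_lemma hp1 hp2 ξ η h
  · have hneg : ‖V p (ξ - η)‖ = ‖V p (η - ξ)‖ := by
      rw [show ξ - η = -(η - ξ) by abel,
        show V p (-(η - ξ)) = -(V p (η - ξ)) by rw [V, V, norm_neg, smul_neg], norm_neg]
    rw [norm_sub_rev, hneg]
    exact key_lemma hp1 hp2 η ξ h
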